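/- Let γ ∈ ℤ, j ∈ {1,…,p−1}, n ∈ ℚ_p, and let J ∈ ℚ_p satisfy |J − 1|_p ≤ p^{-1} and |n·(J − 1)|_p ≤ 1. Then G(J,0)ψ_{γ n j} = χ(p^{-1}·j·n·(1−J)) · ψ_{γ n j} (equality of functions ℚ_p → ℂ). -/

import Mathlib

open MeasureTheory

/-- Action of the `p`-adic affine group on complex-valued functions:
`(G(a,b)f)(x) = |a|_p^{-1/2} f((x-b)/a)`. -/
noncomputable def Gact (p : ℕ) [Fact p.Prime] (a b : ℚ_[p]) (f : ℚ_[p] → ℂ) : ℚ_[p] → ℂ :=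
  fun x => ((‖a‖ ^ (-(1/2) : ℝ) : ℝ) : ℂ) * f ((x - b) / a)

/-- `Ω(|x|_p)`: the indicator function of the unit ball `ℤ_p`. -/
noncomputable def Omega (p : ℕ) [Fact p.Prime] : ℚ_[p] → ℂ :=
  fun x => if ‖x‖ ≤ 1 then 1 else 0

/-- `R_σ`: the set of finite sums `∑_{l=-δ}^{σ-1} n_l p^l` with digits `n_l ∈ {0,…,p-1}`,
a complete set of representatives of `ℚ_p / p^σ ℤ_p`. -/
def Rset (p : ℕ) [Fact p.Prime] (σ : ℤ) : Set ℚ_[p] :=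
  { x | ∃ (δ : ℕ) (d : ℤ → ℕ), (∀ l, d l < p) ∧
      x = ∑ l ∈ Finset.Icc (-(δ : ℤ)) (σ - 1), (d l : ℚ_[p]) * (p : ℚ_[p]) ^ l }

/-- The `p`-adic wavelet `ψ_{γ n j}(x) = p^{-γ/2} χ(p⁻¹ j (p^γ x - n)) Ω(|p^γ x - n|_p)`. -/
noncomputable def wavelet (p : ℕ) [Fact p.Prime] (χ : ℚ_[p] → ℂ) (γ : ℤ) (n : ℚ_[p]) (j : ℕ) :
    ℚ_[p] → ℂ :=
  fun x => (((p : ℝ) ^ (-(γ : ℝ) / 2) : ℝ) : ℂ) *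
    χ ((p : ℚ_[p])⁻¹ * (j : ℚ_[p]) * ((p : ℚ_[p]) ^ γ * x - n)) *
    Omega p ((p : ℚ_[p]) ^ γ * x - n)

/-- The basic `p`-adic wavelet `ψ(x) = χ(p⁻¹ x) Ω(|x|_p)`. -/
noncomputable def psiw (p : ℕ) [Fact p.Prime] (χ : ℚ_[p] → ℂ) : ℚ_[p] → ℂ :=
  fun x => χ ((p : ℚ_[p])⁻¹ * x) * Omega p x

theorem stmt_11 (p : ℕ) [Fact p.Prime] (χ : ℚ_[p] → ℂ)
    (hχ_add : ∀ x y : ℚ_[p], χ (x + y) = χ x * χ y)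
    (hχ_norm : ∀ x : ℚ_[p], ‖χ x‖ = 1)
    (hχ_triv : ∀ x : ℚ_[p], ‖x‖ ≤ 1 → χ x = 1)
    (hχ_nontriv : χ ((p : ℚ_[p])⁻¹) ≠ 1)
    (γ : ℤ) (j : ℕ) (hj : 1 ≤ j ∧ j ≤ p - 1) (n : ℚ_[p])
    (J : ℚ_[p]) (hJ : ‖J - 1‖ ≤ (p : ℝ) ^ (-1 : ℤ)) (hnJ : ‖n * (J - 1)‖ ≤ 1) :
    Gact p J 0 (wavelet p χ γ n j) =
      fun x => χ ((p : ℚ_[p])⁻¹ * (j : ℚ_[p]) * n * (1 - J)) * wavelet p χ γ n j x := by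

  have hp : p.Prime := Fact.out
  have hp1 : (1:ℝ) < p := by exact_mod_cast hp.one_lt
  have hp0 : (p:ℝ) ≠ 0 := by positivity
  have hJlt : ‖J - 1‖ < 1 := lt_of_le_of_lt hJ (by
    rw [zpow_neg_one]
    exact inv_lt_one_of_one_lt₀ hp1)
  have hJ1 : ‖J‖ = 1 := by
    have h := Padic.add_eq_max_of_ne (q := J - 1) (r := 1) (by
      rw [norm_one]; exact ne_of_lt hJlt)
    rw [sub_add_cancel, norm_one] at h
    rw [h, max_eq_right (le_of_lt hJlt)]
  have hJ0 : J ≠ 0 := by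
    intro h; rw [h, norm_zero] at hJ1; exact one_ne_zero hJ1.symm
  set a : ℚ_[p] := (p : ℚ_[p])⁻¹ * (j : ℚ_[p]) with ha
  have hja : ‖(j : ℚ_[p])‖ ≤ 1 := by
    have := Padic.norm_int_le_one (p := p) (j : ℤ)
    push_cast at this; exact this
  have hanorm : ‖a‖ ≤ p := by
    rw [ha, norm_mul, norm_inv, Padic.norm_p, inv_inv]
    calc (p:ℝ) * ‖(j:ℚ_[p])‖ ≤ p * 1 := by
          exact mul_le_mul_of_nonneg_left hja (le_of_lt (by linarith))
      _ = p := mul_one _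
  have h1J : ‖1 - J‖ ≤ (p:ℝ)⁻¹ := by
    rw [norm_sub_rev]; rw [zpow_neg_one] at hJ; exact hJ
  have hn1 : ‖n * (1 - J)‖ ≤ 1 := by
    rw [show n * (1 - J) = -(n * (J - 1)) by ring, norm_neg]; exact hnJ
  have hD : ∀ t : ℚ_[p], ‖t‖ ≤ 1 → ‖a * t * ((1 - J) / J)‖ ≤ 1 := by
    intro t ht
    rw [norm_mul, norm_mul, norm_div, hJ1, div_one]
    calc ‖a‖ * ‖t‖ * ‖1 - J‖ ≤ (p:ℝ) * 1 * (p:ℝ)⁻¹ := by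
          apply mul_le_mul (mul_le_mul hanorm ht (norm_nonneg _) (by positivity)) h1J
            (norm_nonneg _) (by positivity)
      _ = 1 := by field_simp
  funext x
  simp only [Gact, wavelet, Omega, sub_zero, hJ1, Real.one_rpow, Complex.ofReal_one, one_mul]
  set u : ℚ_[p] := (p:ℚ_[p])^γ * x - n with hu
  have harg : (p:ℚ_[p])^γ * (x / J) - n = (u + n * (1 - J)) / J := by
    rw [hu]; field_simp; ring
  rw [harg]
  by_cases hle : ‖u‖ ≤ 1
  · have hsum : ‖u + n * (1 - J)‖ ≤ 1 :=
      le_trans (Padic.nonarchimedean _ _) (max_le hle hn1)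
    have hdiv : ‖(u + n * (1 - J)) / J‖ ≤ 1 := by
      rw [norm_div, hJ1, div_one]; exact hsum
    rw [if_pos hdiv, if_pos hle]
    have key : a * ((u + n * (1 - J)) / J) =
        (a * n * (1 - J) + a * u) + a * (u + n * (1 - J)) * ((1 - J) / J) := by
      field_simp; ring
    have hchi : χ (a * ((u + n * (1 - J)) / J)) = χ (a * n * (1 - J)) * χ (a * u) := by
      rw [key, hχ_add, hχ_add, hχ_triv _ (hD _ hsum), mul_one]
    rw [hchi]; ring
  · have hne : ‖n * (1 - J)‖ ≠ ‖u‖ := by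
      intro h; exact hle (h ▸ hn1)
    have hsum : ‖u + n * (1 - J)‖ = ‖u‖ := by
      have h := Padic.add_eq_max_of_ne (q := u) (r := n * (1 - J)) (Ne.symm hne)
      rw [h, max_eq_left (le_trans hn1 (le_of_not_ge hle))]
    have hdiv : ¬ ‖(u + n * (1 - J)) / J‖ ≤ 1 := by
      rw [norm_div, hJ1, div_one, hsum]; exact hle
    rw [if_neg hdiv, if_neg hle]
    ring
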